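/- Let m and n both be odd, and let R ∈ ℤ^m, S ∈ ℤ^n be initially nonincreasing, palindromic nonnegative integer vectors with equal component sums, every component of R at most n, every component of S at most m, and with r_⌈m/2⌉ and s_⌈n/2⌉ of the same parity. Let R' ∈ ℤ^{m−1} be obtained from R by deleting r_⌈m/2⌉ and then decreasing by 1 its first ⌊s_⌈n/2⌉/2⌋ and last ⌊s_⌈n/2⌉/2⌋ components, and let S' ∈ ℤ^{n−1} be obtained from S by deleting s_⌈n/2⌉ and then decreasing by 1 its first ⌊r_⌈m/2⌉/2⌋ and last ⌊r_⌈m/2⌉/2⌋ components. Then there exists an m×n (0,1)-matrix with row sum vector R, column sum vector S, and invariant under ρ_π if and only if there exists an (m−1)×(n−1) (0,1)-matrix with row sum vector R', column sum vector S', and invariant under ρ_π. -/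

import Mathlib

namespace CentroAux

lemma rev_eq_iff {k : ℕ} {a b : Fin k} : a.rev = b ↔ a = b.rev := by
  constructor
  · rintro rfl; rw [Fin.rev_rev]
  · rintro rfl; rw [Fin.rev_rev]

lemma card_filter_lt (n t : ℕ) (h : t ≤ n) :
    (Finset.univ.filter (fun y : Fin n => (y : ℕ) < t)).card = t := by
  have : Finset.univ.filter (fun y : Fin n => (y : ℕ) < t)
      = Finset.map (Fin.castLEEmb h) Finset.univ := by
    ext y
    simp only [Finset.mem_filter, Finset.mem_univ, true_and, Finset.mem_map]
    constructor
    · intro hy; exact ⟨⟨(y : ℕ), hy⟩, by simp [Fin.castLEEmb, Fin.ext_iff]⟩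
    · rintro ⟨x, -, rfl⟩; simpa [Fin.castLEEmb] using x.isLt

  rw [this, Finset.card_map, Finset.card_univ, Fintype.card_fin]

lemma sum_rev {n : ℕ} (f : Fin n → ℤ) : ∑ y : Fin n, f y.rev = ∑ y, f y :=
  Fintype.sum_bijective Fin.rev Fin.rev_bijective _ _ (fun _ => rfl)

/-- Split a centrosymmetric vector sum (odd length) into twice left half + center. -/
lemma half_sum {n : ℕ} (hn : n % 2 = 1) (v : Fin n → ℤ)
    (hsym : ∀ y, v y = v y.rev) :
    ∑ y, v y = 2 * ∑ y ∈ Finset.univ.filter (fun y : Fin n => (y : ℕ) < n / 2), v y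
      + v ⟨n / 2, by omega⟩ := by
  classical
  have hsplit := Finset.sum_filter_add_sum_filter_not Finset.univ
    (fun y : Fin n => (y : ℕ) < n / 2) v
  have hsplit2 := Finset.sum_filter_add_sum_filter_not
    (Finset.univ.filter (fun y : Fin n => ¬ (y : ℕ) < n / 2))
    (fun y : Fin n => (y : ℕ) = n / 2) v
  have hone : (Finset.univ.filter (fun y : Fin n => ¬ (y : ℕ) < n / 2)).filter
      (fun y : Fin n => (y : ℕ) = n / 2) = {⟨n / 2, by omega⟩} := by
    ext y
    simp only [Finset.mem_filter, Finset.mem_univ, true_and, Finset.mem_singleton,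
      Fin.ext_iff]
    omega
  have hgt : (Finset.univ.filter (fun y : Fin n => ¬ (y : ℕ) < n / 2)).filter
      (fun y : Fin n => ¬ (y : ℕ) = n / 2)
      = Finset.univ.filter (fun y : Fin n => n / 2 < (y : ℕ)) := by
    ext y
    simp only [Finset.mem_filter, Finset.mem_univ, true_and]
    omega
  have hrevsum : ∑ y ∈ Finset.univ.filter (fun y : Fin n => n / 2 < (y : ℕ)), v y
      = ∑ y ∈ Finset.univ.filter (fun y : Fin n => (y : ℕ) < n / 2), v y := by
    refine Finset.sum_nbij' Fin.rev Fin.rev ?_ ?_ ?_ ?_ ?_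
    · intro a ha
      simp only [Finset.mem_filter, Finset.mem_univ, true_and, Fin.val_rev] at *
      have := a.isLt; omega
    · intro a ha
      simp only [Finset.mem_filter, Finset.mem_univ, true_and, Fin.val_rev] at *
      have := a.isLt; omega
    · intro a _; exact Fin.rev_rev a
    · intro a _; exact Fin.rev_rev a
    · intro a _; exact hsym a
  rw [hone, hgt, Finset.sum_singleton, hrevsum] at hsplit2
  omega


/-- Desired pattern for the middle line. -/
def Pat (n t : ℕ) (c : ℤ) (y : Fin n) : ℤ :=
  if (y : ℕ) < t ∨ n - t ≤ (y : ℕ) then 1 else if (y : ℕ) = n / 2 then c else 0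

/-- Embedding of `Fin (n-1)` into `Fin n` skipping the middle index. -/
def emb (n : ℕ) (hn : n % 2 = 1) (j : Fin (n - 1)) : Fin n :=
  ⟨if (j : ℕ) < n / 2 then (j : ℕ) else (j : ℕ) + 1, by
    have := j.isLt; split <;> omega⟩

lemma emb_val (n : ℕ) (hn : n % 2 = 1) (j : Fin (n - 1)) :
    ((emb n hn j : Fin n) : ℕ) = if (j : ℕ) < n / 2 then (j : ℕ) else (j : ℕ) + 1 := rfl

lemma emb_ne_mid (n : ℕ) (hn : n % 2 = 1) (j : Fin (n - 1)) :
    ((emb n hn j : Fin n) : ℕ) ≠ n / 2 := by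
  have := j.isLt
  rw [emb_val]
  split <;> omega

lemma emb_rev (n : ℕ) (hn : n % 2 = 1) (j : Fin (n - 1)) :
    (emb n hn j).rev = emb n hn j.rev := by
  have h1 := j.isLt
  apply Fin.ext
  rw [Fin.val_rev, emb_val, emb_val, Fin.val_rev]
  split_ifs <;> omega

lemma sum_emb {n : ℕ} (hn : n % 2 = 1) (f : Fin n → ℤ) :
    ∑ j : Fin (n - 1), f (emb n hn j) = ∑ j, f j - f ⟨n / 2, by omega⟩ := by
  classical
  have hmem : (⟨n / 2, by omega⟩ : Fin n) ∈ (Finset.univ : Finset (Fin n)) :=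
    Finset.mem_univ _
  have hsplit := Finset.add_sum_erase Finset.univ f hmem
  have hbij : ∑ j ∈ (Finset.univ : Finset (Fin (n-1))), f (emb n hn j)
      = ∑ j ∈ Finset.univ.erase (⟨n / 2, by omega⟩ : Fin n), f j := by
    refine Finset.sum_bij' (fun a _ => emb n hn a)
      (fun x hx => ⟨if (x : ℕ) < n / 2 then (x : ℕ) else (x : ℕ) - 1, by
        have h1 := x.isLt
        have h2 : (x : ℕ) ≠ n / 2 := fun h => by
          simp only [Finset.mem_erase] at hx
          exact hx.1 (Fin.ext (by simpa using h))
        split <;> omega⟩) ?_ ?_ ?_ ?_ ?_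
    · intro a _
      simp only [Finset.mem_erase, Finset.mem_univ, and_true]
      intro hco
      exact emb_ne_mid n hn a (by rw [hco])
    · intro a _; exact Finset.mem_univ _
    · intro a _
      apply Fin.ext
      have := a.isLt
      simp only [emb_val]
      split_ifs <;> omega
    · intro a ha
      have h2 : (a : ℕ) ≠ n / 2 := fun h => by
        simp only [Finset.mem_erase] at ha
        exact ha.1 (Fin.ext (by simpa using h))
      apply Fin.ext
      have := a.isLt
      simp only [emb_val]
      split_ifs <;> omega
    · intro a _; rfl
  rw [hbij]
  omega

lemma row_facts {n : ℕ} (hn : n % 2 = 1) (Rm : ℤ) (t : ℕ) (ht : (t : ℤ) = Rm / 2)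
    (v : Fin n → ℤ) (h01 : ∀ y, v y = 0 ∨ v y = 1)
    (hsum : ∑ y, v y = Rm) (hsym : ∀ y, v y = v y.rev) :
    (∑ y ∈ Finset.univ.filter (fun y : Fin n => (y : ℕ) < n / 2), v y = t)
    ∧ v ⟨n / 2, by omega⟩ = Rm % 2 ∧ t ≤ n / 2 := by
  have HS := half_sum hn v hsym
  rw [hsum] at HS
  have hC := h01 ⟨n / 2, by omega⟩
  have hub : Rm ≤ n := by
    calc Rm = ∑ y, v y := hsum.symm
    _ ≤ ∑ _y : Fin n, (1 : ℤ) := Finset.sum_le_sum (fun y _ => by rcases h01 y with h|h <;> omega)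
    _ = n := by simp
  refine ⟨?_, ?_, ?_⟩ <;> omega

lemma row_done {n : ℕ} (hn : n % 2 = 1) (Rm : ℤ) (t : ℕ) (ht : (t : ℤ) = Rm / 2)
    (v : Fin n → ℤ) (h01 : ∀ y, v y = 0 ∨ v y = 1)
    (hsum : ∑ y, v y = Rm) (hsym : ∀ y, v y = v y.rev)
    (hall : ∀ y : Fin n, (y : ℕ) < t → v y = 1) :
    ∀ y, v y = Pat n t (Rm % 2) y := by
  obtain ⟨hLS, hC, htn⟩ := row_facts hn Rm t ht v h01 hsum hsym
  -- first: every y with t ≤ y < n/2 has v y = 0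
  have hzero : ∀ y : Fin n, t ≤ (y : ℕ) → (y : ℕ) < n / 2 → v y = 0 := by
    have hsplit := Finset.sum_filter_add_sum_filter_not
      (Finset.univ.filter (fun y : Fin n => (y : ℕ) < n / 2))
      (fun y : Fin n => (y : ℕ) < t) v
    have hfe : (Finset.univ.filter (fun y : Fin n => (y : ℕ) < n / 2)).filter
        (fun y : Fin n => (y : ℕ) < t) = Finset.univ.filter (fun y : Fin n => (y : ℕ) < t) := by
      ext y
      simp only [Finset.mem_filter, Finset.mem_univ, true_and]
      omega
    have hones : ∑ y ∈ Finset.univ.filter (fun y : Fin n => (y : ℕ) < t), v y = t := by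
      rw [Finset.sum_congr rfl (fun y hy => hall y (by simpa using hy))]
      simp [card_filter_lt n t (by omega)]
    rw [hfe, hones, hLS] at hsplit
    have h0 : ∑ y ∈ (Finset.univ.filter (fun y : Fin n => (y : ℕ) < n / 2)).filter
        (fun y : Fin n => ¬ (y : ℕ) < t), v y = 0 := by omega
    rw [Finset.sum_eq_zero_iff_of_nonneg (fun y _ => by rcases h01 y with h|h <;> omega)] at h0
    intro y h1 h2
    exact h0 y (by simp only [Finset.mem_filter, Finset.mem_univ, true_and]; omega)
  intro y
  unfold Pat
  rcases lt_trichotomy ((y : ℕ)) (n / 2) with hy | hy | hy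
  · rcases Nat.lt_or_ge (y : ℕ) t with h | h
    · rw [if_pos (Or.inl h)]; exact hall y h
    · rw [if_neg (by omega), if_neg (by omega)]; exact hzero y h hy
  · rw [if_neg (by omega), if_pos hy]
    have : y = ⟨n / 2, by omega⟩ := Fin.ext hy
    rw [this, hC]
  · -- right half: use symmetry
    have hyrev : ((y.rev : Fin n) : ℕ) = n - 1 - (y : ℕ) := by
      rw [Fin.val_rev]; omega
    have h2 : ((y.rev : Fin n) : ℕ) < n / 2 := by have := y.isLt; omega
    rw [hsym y]
    rcases Nat.lt_or_ge ((y.rev : Fin n) : ℕ) t with h | h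
    · rw [hall y.rev h, if_pos (Or.inr (by have := y.isLt; omega))]
    · rw [hzero y.rev h h2, if_neg (by have := y.isLt; omega), if_neg (by omega)]

/-- Kronecker delta column indicator. -/
def D {n : ℕ} (a y : Fin n) : ℤ := if y = a then 1 else 0

lemma Dself {n : ℕ} (a : Fin n) : D a a = 1 := by simp [D]

lemma Dne {n : ℕ} {a y : Fin n} (h : y ≠ a) : D a y = 0 := by simp [D, h]

lemma Dsum {n : ℕ} (a : Fin n) : ∑ y, D a y = 1 := by simp [D]

lemma Drev {n : ℕ} (a y : Fin n) : D a y.rev = D a.rev y := by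
  unfold D
  by_cases h : y = a.rev
  · subst h; rw [if_pos (Fin.rev_rev a), if_pos rfl]
  · rw [if_neg (fun hc => h (by rw [← hc, Fin.rev_rev])), if_neg h]

lemma fix_row (m n : ℕ) (hm : m % 2 = 1) (hn : n % 2 = 1)
    (R : Fin m → ℤ) (S : Fin n → ℤ)
    (hSmono : ∀ i j : Fin n, i ≤ j → (j : ℕ) < n / 2 → S j ≤ S i)
    (t : ℕ) (ht : (t : ℤ) = R ⟨m / 2, by omega⟩ / 2)
    (A : Matrix (Fin m) (Fin n) ℤ)
    (h01 : ∀ i j, A i j = 0 ∨ A i j = 1)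
    (hrow : ∀ i, ∑ j, A i j = R i)
    (hcol : ∀ j, ∑ i, A i j = S j)
    (hcen : ∀ i j, A i j = A i.rev j.rev) :
    ∃ B : Matrix (Fin m) (Fin n) ℤ,
      (∀ i j, B i j = 0 ∨ B i j = 1) ∧
      (∀ i, ∑ j, B i j = R i) ∧
      (∀ j, ∑ i, B i j = S j) ∧
      (∀ i j, B i j = B i.rev j.rev) ∧
      (∀ y, B ⟨m / 2, by omega⟩ y = Pat n t (R ⟨m / 2, by omega⟩ % 2) y) ∧
      (∀ x, B x ⟨n / 2, by omega⟩ = A x ⟨n / 2, by omega⟩) := by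
  classical
  have hm2 : m / 2 < m := by omega
  have hn2 : n / 2 < n := by omega
  set midr : Fin m := ⟨m / 2, hm2⟩ with hmidr
  set midc : Fin n := ⟨n / 2, hn2⟩ with hmidc
  have hmrv : (midr : ℕ) = m / 2 := rfl
  have hmcv : (midc : ℕ) = n / 2 := rfl
  have hmidrrev : midr.rev = midr := Fin.ext (by rw [Fin.val_rev, hmrv]; omega)
  suffices H : ∀ k (A : Matrix (Fin m) (Fin n) ℤ),
      (∀ i j, A i j = 0 ∨ A i j = 1) → (∀ i, ∑ j, A i j = R i) →
      (∀ j, ∑ i, A i j = S j) → (∀ i j, A i j = A i.rev j.rev) →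
      (Finset.univ.filter (fun y : Fin n => (y : ℕ) < t ∧ A midr y = 0)).card ≤ k →
      ∃ B : Matrix (Fin m) (Fin n) ℤ,
        (∀ i j, B i j = 0 ∨ B i j = 1) ∧
        (∀ i, ∑ j, B i j = R i) ∧
        (∀ j, ∑ i, B i j = S j) ∧
        (∀ i j, B i j = B i.rev j.rev) ∧
        (∀ y, B midr y = Pat n t (R midr % 2) y) ∧
        (∀ x, B x midc = A x midc) by
    exact H _ A h01 hrow hcol hcen le_rfl
  intro k
  induction k with
  | zero =>
    intro A h01 hrow hcol hcen hcard
    have hsym : ∀ y, A midr y = A midr y.rev := fun y => by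
      rw [hcen midr y, hmidrrev]
    have hempty : ∀ y : Fin n, (y : ℕ) < t → A midr y = 1 := by
      intro y hy
      have he : (Finset.univ.filter (fun y : Fin n => (y : ℕ) < t ∧ A midr y = 0)) = ∅ :=
        Finset.card_eq_zero.mp (by omega)
      rcases h01 midr y with h | h
      · exfalso
        have : y ∈ (Finset.univ.filter (fun y : Fin n => (y : ℕ) < t ∧ A midr y = 0)) := by
          simp only [Finset.mem_filter, Finset.mem_univ, true_and]; exact ⟨hy, h⟩
        rw [he] at this
        simp at this
      · exact h
    exact ⟨A, h01, hrow, hcol, hcen,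
      row_done hn (R midr) t ht (A midr) (h01 midr) (hrow midr) hsym hempty,
      fun x => rfl⟩
  | succ k ih =>
    intro A h01 hrow hcol hcen hcard
    by_cases h0 : (Finset.univ.filter (fun y : Fin n => (y : ℕ) < t ∧ A midr y = 0)).card = 0
    · exact ih A h01 hrow hcol hcen (by omega)
    have hsym : ∀ y, A midr y = A midr y.rev := fun y => by
      rw [hcen midr y, hmidrrev]
    obtain ⟨hLS, hC, htn⟩ :=
      row_facts hn (R midr) t ht (A midr) (h01 midr) (hrow midr) hsym
    -- pick a missing position j0
    obtain ⟨j0, hj0mem⟩ := Finset.card_pos.mp (Nat.pos_of_ne_zero h0)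
    simp only [Finset.mem_filter, Finset.mem_univ, true_and] at hj0mem
    obtain ⟨hj0t, hj00⟩ := hj0mem
    -- find a misplaced one j
    have hj : ∃ jj : Fin n, t ≤ (jj : ℕ) ∧ (jj : ℕ) < n / 2 ∧ A midr jj = 1 := by
      by_contra hcon
      push_neg at hcon
      have hzero : ∀ jj : Fin n, t ≤ (jj : ℕ) → (jj : ℕ) < n / 2 → A midr jj = 0 :=
        fun jj h1 h2 => (h01 midr jj).resolve_right (hcon jj h1 h2)
      have hsplit := Finset.sum_filter_add_sum_filter_not
        (Finset.univ.filter (fun y : Fin n => (y : ℕ) < n / 2))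
        (fun y : Fin n => (y : ℕ) < t) (A midr)
      have hfe : (Finset.univ.filter (fun y : Fin n => (y : ℕ) < n / 2)).filter
          (fun y : Fin n => (y : ℕ) < t)
          = Finset.univ.filter (fun y : Fin n => (y : ℕ) < t) := by
        ext y
        simp only [Finset.mem_filter, Finset.mem_univ, true_and]
        omega
      have h2 : ∑ y ∈ (Finset.univ.filter (fun y : Fin n => (y : ℕ) < n / 2)).filter
          (fun y : Fin n => ¬ (y : ℕ) < t), A midr y = 0 :=
        Finset.sum_eq_zero (fun y hy => by
          simp only [Finset.mem_filter, Finset.mem_univ, true_and] at hy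
          exact hzero y (by omega) hy.1)
      rw [hfe, h2, hLS] at hsplit
      have hFt : ∑ y ∈ Finset.univ.filter (fun y : Fin n => (y : ℕ) < t), A midr y
          < ∑ _y ∈ Finset.univ.filter (fun y : Fin n => (y : ℕ) < t), (1 : ℤ) := by
        refine Finset.sum_lt_sum (fun y _ => by rcases h01 midr y with h | h <;> omega)
          ⟨j0, ?_, ?_⟩
        · simp only [Finset.mem_filter, Finset.mem_univ, true_and]; exact hj0t
        · omega
      have hone : ∑ _y ∈ Finset.univ.filter (fun y : Fin n => (y : ℕ) < t), (1 : ℤ) = t := by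
        rw [Finset.sum_const, card_filter_lt n t (by omega)]
        simp
      omega
    obtain ⟨j, hjt, hjlt, hj1⟩ := hj
    have hSj : S j ≤ S j0 := hSmono j0 j (by rw [Fin.le_def]; omega) hjlt
    -- find a pivot row i
    have hi : ∃ i : Fin m, i ≠ midr ∧ A i j0 = 1 ∧ A i j = 0 := by
      by_contra hcon
      push_neg at hcon
      have hle : ∀ x ∈ Finset.univ.erase midr, A x j0 ≤ A x j := by
        intro x hx
        have hxne : x ≠ midr := (Finset.mem_erase.mp hx).1
        rcases h01 x j0 with h | h
        · rcases h01 x j with h' | h' <;> omega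
        · have h' := hcon x hxne h
          rcases h01 x j with h'' | h'' <;> omega
      have hsum_le := Finset.sum_le_sum hle
      have e0 := Finset.add_sum_erase Finset.univ (fun x => A x j0) (Finset.mem_univ midr)
      have e1 := Finset.add_sum_erase Finset.univ (fun x => A x j) (Finset.mem_univ midr)
      have hc0 := hcol j0
      have hc1 := hcol j
      omega
    obtain ⟨i, hine, hij0, hij⟩ := hi
    -- value facts via symmetry
    have hj00r : A midr j0.rev = 0 := by rw [← hsym j0]; exact hj00
    have hj1r : A midr j.rev = 1 := by rw [← hsym j]; exact hj1
    have hij0r : A i.rev j0.rev = 1 := by rw [← hcen i j0]; exact hij0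
    have hijr : A i.rev j.rev = 0 := by rw [← hcen i j]; exact hij
    -- distinctness facts
    have hj0v : (j0.rev : ℕ) = n - 1 - (j0 : ℕ) := by rw [Fin.val_rev]; omega
    have hjv : (j.rev : ℕ) = n - 1 - (j : ℕ) := by rw [Fin.val_rev]; omega
    have hj0j : j0 ≠ j := by simp only [ne_eq, Fin.ext_iff]; omega
    have hj0j0r : j0 ≠ j0.rev := by simp only [ne_eq, Fin.ext_iff]; omega
    have hj0jr : j0 ≠ j.rev := by simp only [ne_eq, Fin.ext_iff]; omega
    have hjj0r : j ≠ j0.rev := by simp only [ne_eq, Fin.ext_iff]; omega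
    have hjjr : j ≠ j.rev := by simp only [ne_eq, Fin.ext_iff]; omega
    have hj0rjr : j0.rev ≠ j.rev := by simp only [ne_eq, Fin.ext_iff]; omega
    have hmcj0 : midc ≠ j0 := by simp only [ne_eq, Fin.ext_iff, hmcv]; omega
    have hmcj : midc ≠ j := by simp only [ne_eq, Fin.ext_iff, hmcv]; omega
    have hmcj0r : midc ≠ j0.rev := by simp only [ne_eq, Fin.ext_iff, hmcv]; omega
    have hmcjr : midc ≠ j.rev := by simp only [ne_eq, Fin.ext_iff, hmcv]; omega
    have hiv : (i : ℕ) ≠ m / 2 := fun h => hine (Fin.ext (by rw [h, hmrv]))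
    have hirv : (i.rev : ℕ) = m - 1 - (i : ℕ) := by rw [Fin.val_rev]; omega
    have hirevne : i.rev ≠ midr := by
      simp only [ne_eq, Fin.ext_iff, hmrv]
      have := i.isLt; omega
    have hiirev : i ≠ i.rev := by
      simp only [ne_eq, Fin.ext_iff]
      have := i.isLt; omega
    -- the interchange matrix
    set B' : Matrix (Fin m) (Fin n) ℤ := fun x y =>
      A x y + (if x = midr then (D j0 y - D j y + D j0.rev y - D j.rev y) else 0)
            + (if x = i then (D j y - D j0 y) else 0)
            + (if x = i.rev then (D j.rev y - D j0.rev y) else 0) with hB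
    have rowmid : ∀ y, B' midr y
        = A midr y + (D j0 y - D j y + D j0.rev y - D j.rev y) := by
      intro y
      show A midr y + _ + _ + _ = _
      rw [if_pos rfl, if_neg (Ne.symm hine), if_neg (Ne.symm hirevne)]
      ring
    have rowi : ∀ y, B' i y = A i y + (D j y - D j0 y) := by
      intro y
      show A i y + _ + _ + _ = _
      rw [if_neg hine, if_pos rfl, if_neg hiirev]
      ring
    have rowirev : ∀ y, B' i.rev y = A i.rev y + (D j.rev y - D j0.rev y) := by
      intro y
      show A i.rev y + _ + _ + _ = _
      rw [if_neg hirevne, if_neg (Ne.symm hiirev), if_pos rfl]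
      ring
    have rowother : ∀ x, x ≠ midr → x ≠ i → x ≠ i.rev → ∀ y, B' x y = A x y := by
      intro x h1 h2 h3 y
      show A x y + _ + _ + _ = _
      rw [if_neg h1, if_neg h2, if_neg h3]
      ring
    -- 0/1 values
    have h01B : ∀ x y, B' x y = 0 ∨ B' x y = 1 := by
      intro x y
      by_cases hx1 : x = midr
      · rw [hx1, rowmid y]
        by_cases h1 : y = j0
        · rw [h1, Dself, Dne hj0j, Dne hj0j0r, Dne hj0jr]; omega
        by_cases h2 : y = j
        · rw [h2, Dself, Dne (Ne.symm hj0j), Dne hjj0r, Dne hjjr]; omega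
        by_cases h3 : y = j0.rev
        · rw [h3, Dself, Dne (Ne.symm hj0j0r), Dne (Ne.symm hjj0r), Dne hj0rjr]; omega
        by_cases h4 : y = j.rev
        · rw [h4, Dself, Dne (Ne.symm hj0jr), Dne (Ne.symm hjjr), Dne (Ne.symm hj0rjr)]
          omega
        · rw [Dne h1, Dne h2, Dne h3, Dne h4]
          rcases h01 midr y with h | h <;> omega
      by_cases hx2 : x = i
      · rw [hx2, rowi y]
        by_cases h1 : y = j0
        · rw [h1, Dself, Dne hj0j]; omega
        by_cases h2 : y = j
        · rw [h2, Dself, Dne (Ne.symm hj0j)]; omega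
        · rw [Dne h1, Dne h2]
          rcases h01 i y with h | h <;> omega
      by_cases hx3 : x = i.rev
      · rw [hx3, rowirev y]
        by_cases h1 : y = j0.rev
        · rw [h1, Dself, Dne hj0rjr]; omega
        by_cases h2 : y = j.rev
        · rw [h2, Dself, Dne (Ne.symm hj0rjr)]; omega
        · rw [Dne h1, Dne h2]
          rcases h01 i.rev y with h | h <;> omega
      · rw [rowother x hx1 hx2 hx3 y]
        exact h01 x y
    -- row sums
    have hconst : ∀ (P : Prop) [inst : Decidable P] (f : Fin n → ℤ) (z : ℤ),
        (∑ y, f y = z) → (∑ y, (if P then f y else 0)) = if P then z else 0 := by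
      intro P inst f z hf
      split <;> simp [hf]
    have hbr1 : ∑ y, (D j0 y - D j y + D j0.rev y - D j.rev y) = 0 := by
      rw [Finset.sum_sub_distrib, Finset.sum_add_distrib, Finset.sum_sub_distrib,
        Dsum, Dsum, Dsum, Dsum]
      ring
    have hbr2 : ∑ y, (D j y - D j0 y) = 0 := by
      rw [Finset.sum_sub_distrib, Dsum, Dsum]; ring
    have hbr3 : ∑ y, (D j.rev y - D j0.rev y) = 0 := by
      rw [Finset.sum_sub_distrib, Dsum, Dsum]; ring
    have hrowB : ∀ x, ∑ y, B' x y = R x := by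
      intro x
      simp only [hB]
      rw [Finset.sum_add_distrib, Finset.sum_add_distrib, Finset.sum_add_distrib,
        hconst _ _ _ hbr1, hconst _ _ _ hbr2, hconst _ _ _ hbr3, hrow x]
      split_ifs <;> ring
    have hcolB : ∀ y, ∑ x, B' x y = S y := by
      intro y
      simp only [hB]
      rw [Finset.sum_add_distrib, Finset.sum_add_distrib, Finset.sum_add_distrib, hcol y]
      simp only [Finset.sum_ite_eq', Finset.mem_univ, if_true]
      ring
    have hcenB : ∀ x y, B' x y = B' x.rev y.rev := by
      intro x y
      simp only [hB]
      rw [← hcen x y]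
      simp only [Drev, Fin.rev_rev]
      simp only [show (x.rev = midr) ↔ (x = midr) from by rw [rev_eq_iff, hmidrrev],
        show (x.rev = i) ↔ (x = i.rev) from rev_eq_iff,
        show (x.rev = i.rev) ↔ (x = i) from by rw [rev_eq_iff, Fin.rev_rev]]
      split_ifs <;> ring
    -- measure decreases
    have hmeas : (Finset.univ.filter (fun y : Fin n => (y : ℕ) < t ∧ B' midr y = 0)).card
        ≤ k := by
      have hsub : (Finset.univ.filter (fun y : Fin n => (y : ℕ) < t ∧ B' midr y = 0))
          ⊆ (Finset.univ.filter (fun y : Fin n => (y : ℕ) < t ∧ A midr y = 0)) := by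
        intro y hy
        simp only [Finset.mem_filter, Finset.mem_univ, true_and] at hy ⊢
        obtain ⟨hyt, hy0⟩ := hy
        have hyj : y ≠ j := by simp only [ne_eq, Fin.ext_iff]; omega
        have hyjr : y ≠ j.rev := by simp only [ne_eq, Fin.ext_iff]; omega
        have hyj0r : y ≠ j0.rev := by simp only [ne_eq, Fin.ext_iff]; omega
        have hyj0 : y ≠ j0 := by
          intro h
          rw [h, rowmid, Dself, Dne hj0j, Dne hj0j0r, Dne hj0jr] at hy0
          omega
        refine ⟨hyt, ?_⟩
        rw [rowmid, Dne hyj0, Dne hyj, Dne hyj0r, Dne hyjr] at hy0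
        omega
      have hj0A : j0 ∈ (Finset.univ.filter
          (fun y : Fin n => (y : ℕ) < t ∧ A midr y = 0)) := by
        simp only [Finset.mem_filter, Finset.mem_univ, true_and]
        exact ⟨hj0t, hj00⟩
      have hj0B : j0 ∉ (Finset.univ.filter
          (fun y : Fin n => (y : ℕ) < t ∧ B' midr y = 0)) := by
        simp only [Finset.mem_filter, Finset.mem_univ, true_and, not_and]
        intro _
        rw [rowmid, Dself, Dne hj0j, Dne hj0j0r, Dne hj0jr]
        omega
      have hss := Finset.card_lt_card
        ((Finset.ssubset_iff_of_subset hsub).mpr ⟨j0, hj0A, hj0B⟩)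
      omega
    -- middle column preserved
    have hmidcol : ∀ x, B' x midc = A x midc := by
      intro x
      by_cases hx1 : x = midr
      · rw [hx1, rowmid, Dne hmcj0, Dne hmcj, Dne hmcj0r, Dne hmcjr]
        ring
      by_cases hx2 : x = i
      · rw [hx2, rowi, Dne hmcj0, Dne hmcj]
        ring
      by_cases hx3 : x = i.rev
      · rw [hx3, rowirev, Dne hmcj0r, Dne hmcjr]
        ring
      · exact rowother x hx1 hx2 hx3 midc
    obtain ⟨B, p1, p2, p3, p4, p5, p6⟩ := ih B' h01B hrowB hcolB hcenB hmeas
    exact ⟨B, p1, p2, p3, p4, p5, fun x => (p6 x).trans (hmidcol x)⟩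

def pem (m : ℕ) (hm : m % 2 = 1) (x : Fin m) (hx : (x : ℕ) ≠ m / 2) : Fin (m - 1) :=
  ⟨if (x : ℕ) < m / 2 then (x : ℕ) else (x : ℕ) - 1, by have := x.isLt; split <;> omega⟩

lemma pem_val (m : ℕ) (hm : m % 2 = 1) (x : Fin m) (hx : (x : ℕ) ≠ m / 2) :
    ((pem m hm x hx : Fin (m - 1)) : ℕ)
      = if (x : ℕ) < m / 2 then (x : ℕ) else (x : ℕ) - 1 := rfl

lemma pem_emb (m : ℕ) (hm : m % 2 = 1) (j : Fin (m - 1))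
    (h : ((emb m hm j : Fin m) : ℕ) ≠ m / 2) : pem m hm (emb m hm j) h = j := by
  apply Fin.ext
  rw [pem_val, emb_val]
  have := j.isLt
  split_ifs <;> omega

lemma pem_rev (m : ℕ) (hm : m % 2 = 1) (x : Fin m) (hx : (x : ℕ) ≠ m / 2)
    (hx' : ((x.rev : Fin m) : ℕ) ≠ m / 2) :
    pem m hm x.rev hx' = (pem m hm x hx).rev := by
  apply Fin.ext
  rw [Fin.val_rev, pem_val, pem_val, Fin.val_rev]
  have := x.isLt
  split_ifs <;> omega

lemma sum_val_eq (n : ℕ) (hn : n % 2 = 1) (z : ℤ) :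
    ∑ y : Fin n, (if (y : ℕ) = n / 2 then z else 0) = z := by
  rw [Finset.sum_eq_single (⟨n / 2, by omega⟩ : Fin n)]
  · exact if_pos rfl
  · intro b _ hb
    exact if_neg (fun h => hb (Fin.ext h))
  · intro h
    exact absurd (Finset.mem_univ _) h

lemma ind_sum (n t : ℕ) (hn : n % 2 = 1) (htn : t ≤ n / 2) :
    ∑ y : Fin n, (if (y : ℕ) < t ∨ n - t ≤ (y : ℕ) then (1 : ℤ) else 0) = 2 * t := by
  have h1 : ∀ y : Fin n, (if (y : ℕ) < t ∨ n - t ≤ (y : ℕ) then (1 : ℤ) else 0)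
      = (if (y : ℕ) < t then (1 : ℤ) else 0) + (if n - t ≤ (y : ℕ) then (1 : ℤ) else 0) := by
    intro y; have := y.isLt; split_ifs <;> omega
  rw [Finset.sum_congr rfl (fun y _ => h1 y), Finset.sum_add_distrib]
  have h2 : ∑ y : Fin n, (if (y : ℕ) < t then (1 : ℤ) else 0) = t := by
    rw [Finset.sum_ite, Finset.sum_const, Finset.sum_const_zero, card_filter_lt n t (by omega)]
    simp
  have h3 : ∑ y : Fin n, (if n - t ≤ (y : ℕ) then (1 : ℤ) else 0) = t := by
    rw [← sum_rev (fun y => if n - t ≤ (y : ℕ) then (1 : ℤ) else 0)]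
    rw [Finset.sum_congr rfl (fun y (_ : y ∈ Finset.univ) => ?_), h2]
    have := y.isLt
    rw [Fin.val_rev]
    split_ifs <;> omega
  omega


lemma sum_dite {n : ℕ} (hn : n % 2 = 1) (f : Fin (n - 1) → ℤ) :
    ∑ y : Fin n, (if hy : (y : ℕ) = n / 2 then 0 else f (pem n hn y hy)) = ∑ j', f j' := by
  have he := sum_emb hn (fun y => if hy : (y : ℕ) = n / 2 then 0 else f (pem n hn y hy))
  have hge : ∀ j' : Fin (n - 1),
      (if hy : ((emb n hn j' : Fin n) : ℕ) = n / 2 then (0 : ℤ)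
        else f (pem n hn (emb n hn j') hy)) = f j' := fun j' => by
    rw [dif_neg (emb_ne_mid n hn j'), pem_emb n hn j' (emb_ne_mid n hn j')]
  rw [Finset.sum_congr rfl (fun j' _ => hge j'), dif_pos rfl, sub_zero] at he
  exact he.symm

end CentroAux

set_option maxHeartbeats 2000000 in
open CentroAux in
/-- **ρ_π-invariant (0,1)-matrices, both `m` and `n` odd: reduction.**
Assume `R`, `S` are initially nonincreasing palindromic nonnegative integer
vectors with equal sums, components bounded by `n` resp. `m`, and middle
components `r_{⌈m/2⌉}`, `s_{⌈n/2⌉}` of the same parity.  With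
`t = ⌊r_{⌈m/2⌉}/2⌋` and `u = ⌊s_{⌈n/2⌉}/2⌋`, the class `𝒜^π(R,S)` is nonempty
iff `𝒜^π(R',S')` is, where `R'` deletes the middle component of `R` and then
decreases its first `u` and last `u` components by one, and `S'` deletes the
middle component of `S` and then decreases its first `t` and last `t`
components by one. -/
theorem centrosymmetric_zeroOne_odd_odd (m n : ℕ)
    (hm : m % 2 = 1) (hn : n % 2 = 1)
    (R : Fin m → ℤ) (S : Fin n → ℤ)
    (hR0 : ∀ i, 0 ≤ R i) (hS0 : ∀ j, 0 ≤ S j)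
    (hsum : ∑ i, R i = ∑ j, S j)
    (hRle : ∀ i, R i ≤ n) (hSle : ∀ j, S j ≤ m)
    (hRpal : ∀ i, R i = R i.rev) (hSpal : ∀ j, S j = S j.rev)
    (hRmono : ∀ i j : Fin m, i ≤ j → (j : ℕ) < m / 2 → R j ≤ R i)
    (hSmono : ∀ i j : Fin n, i ≤ j → (j : ℕ) < n / 2 → S j ≤ S i)
    (hpar : R ⟨m / 2, by omega⟩ % 2 = S ⟨n / 2, by omega⟩ % 2)
    (t u : ℕ)
    (ht : (t : ℤ) = R ⟨m / 2, by omega⟩ / 2)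
    (hu : (u : ℤ) = S ⟨n / 2, by omega⟩ / 2) :
    (∃ A : Matrix (Fin m) (Fin n) ℤ,
        (∀ i j, A i j = 0 ∨ A i j = 1) ∧
        (∀ i, ∑ j, A i j = R i) ∧
        (∀ j, ∑ i, A i j = S j) ∧
        (∀ i j, A i j = A i.rev j.rev)) ↔
    (∃ A' : Matrix (Fin (m - 1)) (Fin (n - 1)) ℤ,
        (∀ i j, A' i j = 0 ∨ A' i j = 1) ∧
        (∀ i : Fin (m - 1), ∑ j, A' i j =
          (if (i : ℕ) < m / 2 then R ⟨i.val, by have := i.isLt; omega⟩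
            else R ⟨i.val + 1, by have := i.isLt; omega⟩) -
          (if (i : ℕ) < u ∨ m - 1 - u ≤ (i : ℕ) then 1 else 0)) ∧
        (∀ j : Fin (n - 1), ∑ i, A' i j =
          (if (j : ℕ) < n / 2 then S ⟨j.val, by have := j.isLt; omega⟩
            else S ⟨j.val + 1, by have := j.isLt; omega⟩) -
          (if (j : ℕ) < t ∨ n - 1 - t ≤ (j : ℕ) then 1 else 0)) ∧
        (∀ i j, A' i j = A' i.rev j.rev)) := by
  classical
  have hm2 : m / 2 < m := by omega
  have hn2 : n / 2 < n := by omega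
  set midr : Fin m := ⟨m / 2, hm2⟩ with hmidr
  set midc : Fin n := ⟨n / 2, hn2⟩ with hmidc
  have hmrv : (midr : ℕ) = m / 2 := rfl
  have hmcv : (midc : ℕ) = n / 2 := rfl
  have htn : t ≤ n / 2 := by
    have h1 := hRle midr; have h2 := hR0 midr; omega
  have hun : u ≤ m / 2 := by
    have h1 := hSle midc; have h2 := hS0 midc; omega
  constructor
  · rintro ⟨A, h01, hrow, hcol, hcen⟩
    obtain ⟨B1, b01, brow, bcol, bcen, bpat, -⟩ :=
      fix_row m n hm hn R S hSmono t ht A h01 hrow hcol hcen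
    obtain ⟨B2', c01, crow, ccol, ccen, cpat, cpres⟩ :=
      fix_row n m hn hm S R hRmono u hu (fun y x => B1 x y)
        (fun y x => b01 x y) (fun y => bcol y) (fun x => brow x)
        (fun y x => bcen x y)
    set M : Matrix (Fin m) (Fin n) ℤ := fun x y => B2' y x with hM
    have M01 : ∀ x y, M x y = 0 ∨ M x y = 1 := fun x y => c01 y x
    have Mrow : ∀ x, ∑ y, M x y = R x := fun x => ccol x
    have Mcol : ∀ y, ∑ x, M x y = S y := fun y => crow y
    have Mcen : ∀ x y, M x y = M x.rev y.rev := fun x y => ccen y x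
    have Mmidrow : ∀ y, M midr y = Pat n t (R midr % 2) y := fun y =>
      (cpres y).trans (bpat y)
    have Mmidcol : ∀ x, M x midc = Pat m u (S midc % 2) x := fun x => cpat x
    refine ⟨fun i' j' => M (emb m hm i') (emb n hn j'), ?_, ?_, ?_, ?_⟩
    · intro i' j'; exact M01 _ _
    · intro i'
      have hs := sum_emb hn (fun y => M (emb m hm i') y)
      have e0 : (⟨n / 2, by omega⟩ : Fin n) = midc := rfl
      rw [e0, Mrow (emb m hm i'), Mmidcol (emb m hm i')] at hs
      have hemv := emb_val m hm i'
      have hilt := i'.isLt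
      have e1 : R (emb m hm i') = if (i' : ℕ) < m / 2 then R ⟨i'.val, by omega⟩
          else R ⟨i'.val + 1, by omega⟩ := by
        by_cases h : (i' : ℕ) < m / 2
        · rw [if_pos h]; congr 1; exact Fin.ext (by rw [hemv, if_pos h])
        · rw [if_neg h]; congr 1; exact Fin.ext (by rw [hemv, if_neg h])
      have e2 : Pat m u (S midc % 2) (emb m hm i')
          = if (i' : ℕ) < u ∨ m - 1 - u ≤ (i' : ℕ) then 1 else 0 := by
        unfold Pat
        rw [hemv]
        split_ifs <;> first | rfl | omega
      rw [hs, e1, e2]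
    · intro j'
      have hs := sum_emb hm (fun x => M x (emb n hn j'))
      have e0 : (⟨m / 2, by omega⟩ : Fin m) = midr := rfl
      rw [e0, Mcol (emb n hn j'), Mmidrow (emb n hn j')] at hs
      have hemv := emb_val n hn j'
      have hjlt := j'.isLt
      have e1 : S (emb n hn j') = if (j' : ℕ) < n / 2 then S ⟨j'.val, by omega⟩
          else S ⟨j'.val + 1, by omega⟩ := by
        by_cases h : (j' : ℕ) < n / 2
        · rw [if_pos h]; congr 1; exact Fin.ext (by rw [hemv, if_pos h])
        · rw [if_neg h]; congr 1; exact Fin.ext (by rw [hemv, if_neg h])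
      have e2 : Pat n t (R midr % 2) (emb n hn j')
          = if (j' : ℕ) < t ∨ n - 1 - t ≤ (j' : ℕ) then 1 else 0 := by
        unfold Pat
        rw [hemv]
        split_ifs <;> first | rfl | omega
      rw [hs, e1, e2]
    · intro i' j'
      show M (emb m hm i') (emb n hn j') = M (emb m hm i'.rev) (emb n hn j'.rev)
      rw [← emb_rev, ← emb_rev]
      exact Mcen _ _
  · rintro ⟨A', a01, arow, acol, acen⟩
    set c : ℤ := R midr % 2 with hcdef
    have hc0 : c = 0 ∨ c = 1 := by omega
    have hRm : R midr = 2 * t + c := by omega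
    have hSm : S midc = 2 * u + c := by
      have := hpar
      omega
    set M : Matrix (Fin m) (Fin n) ℤ := fun x y =>
      if hx : (x : ℕ) = m / 2 then
        (if (y : ℕ) = n / 2 then c else if (y : ℕ) < t ∨ n - t ≤ (y : ℕ) then 1 else 0)
      else if hy : (y : ℕ) = n / 2 then
        (if (x : ℕ) < u ∨ m - u ≤ (x : ℕ) then 1 else 0)
      else A' (pem m hm x hx) (pem n hn y hy) with hMdef
    have Mval1 : ∀ (x : Fin m), (x : ℕ) = m / 2 → ∀ y : Fin n, M x y
        = (if (y : ℕ) = n / 2 then c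
           else if (y : ℕ) < t ∨ n - t ≤ (y : ℕ) then 1 else 0) :=
      fun x hx y => dif_pos hx
    have Mval2 : ∀ (x : Fin m) (hx : ¬ (x : ℕ) = m / 2) (y : Fin n),
        (y : ℕ) = n / 2 → M x y
        = (if (x : ℕ) < u ∨ m - u ≤ (x : ℕ) then 1 else 0) := by
      intro x hx y hy
      show dite _ _ _ = _
      rw [dif_neg hx, dif_pos hy]
    have Mval3 : ∀ (x : Fin m) (hx : ¬ (x : ℕ) = m / 2) (y : Fin n)
        (hy : ¬ (y : ℕ) = n / 2), M x y = A' (pem m hm x hx) (pem n hn y hy) := by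
      intro x hx y hy
      show dite _ _ _ = _
      rw [dif_neg hx, dif_neg hy]
    refine ⟨M, ?_, ?_, ?_, ?_⟩
    · -- 0/1 entries
      intro x y
      by_cases hx : (x : ℕ) = m / 2
      · rw [Mval1 x hx y]
        split_ifs <;> omega
      by_cases hy : (y : ℕ) = n / 2
      · rw [Mval2 x hx y hy]
        split_ifs <;> omega
      · rw [Mval3 x hx y hy]
        exact a01 _ _
    · -- row sums
      intro x
      by_cases hx : (x : ℕ) = m / 2
      · have hxe : x = midr := Fin.ext hx
        have hptw : ∀ y : Fin n, M x y
            = (if (y : ℕ) < t ∨ n - t ≤ (y : ℕ) then (1 : ℤ) else 0)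
              + (if (y : ℕ) = n / 2 then c else 0) := by
          intro y
          rw [Mval1 x hx y]
          have := y.isLt
          split_ifs <;> omega
        rw [Finset.sum_congr rfl (fun y _ => hptw y), Finset.sum_add_distrib,
          ind_sum n t hn htn, sum_val_eq n hn c, hxe, hRm]
      · have hptw : ∀ y : Fin n, M x y
            = (if hy : (y : ℕ) = n / 2 then 0 else A' (pem m hm x hx) (pem n hn y hy))
              + (if (y : ℕ) = n / 2
                 then (if (x : ℕ) < u ∨ m - u ≤ (x : ℕ) then (1 : ℤ) else 0) else 0) := by
          intro y
          by_cases hy : (y : ℕ) = n / 2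
          · rw [Mval2 x hx y hy, dif_pos hy, if_pos hy]; ring
          · rw [Mval3 x hx y hy, dif_neg hy, if_neg hy]; ring
        have hsg : ∑ y : Fin n,
            (if hy : (y : ℕ) = n / 2 then 0 else A' (pem m hm x hx) (pem n hn y hy))
            = ∑ j', A' (pem m hm x hx) j' :=
          sum_dite hn (fun j' => A' (pem m hm x hx) j')
        rw [Finset.sum_congr rfl (fun y _ => hptw y), Finset.sum_add_distrib,
          sum_val_eq n hn _, hsg, arow (pem m hm x hx)]
        have hpv := pem_val m hm x hx
        have hxlt := x.isLt
        have e1 : (if ((pem m hm x hx : Fin (m - 1)) : ℕ) < m / 2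
            then R ⟨(pem m hm x hx : Fin (m - 1)).val, by have := (pem m hm x hx).isLt; omega⟩
            else R ⟨(pem m hm x hx : Fin (m - 1)).val + 1, by have := (pem m hm x hx).isLt; omega⟩)
            = R x := by
          by_cases h : (x : ℕ) < m / 2
          · rw [if_pos (by rw [hpv, if_pos h]; exact h)]
            congr 1
            exact Fin.ext (show ((pem m hm x hx : Fin (m - 1)) : ℕ) = (x : ℕ) from by
              rw [hpv, if_pos h])
          · rw [if_neg (by rw [hpv, if_neg h]; omega)]
            congr 1
            exact Fin.ext (show ((pem m hm x hx : Fin (m - 1)) : ℕ) + 1 = (x : ℕ) from by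
              rw [hpv, if_neg h]; omega)
        have e2 : (if ((pem m hm x hx : Fin (m - 1)) : ℕ) < u
              ∨ m - 1 - u ≤ ((pem m hm x hx : Fin (m - 1)) : ℕ) then (1 : ℤ) else 0)
            = (if (x : ℕ) < u ∨ m - u ≤ (x : ℕ) then (1 : ℤ) else 0) := by
          rw [hpv]
          split_ifs <;> omega
        rw [e1, e2]
        ring
    · -- column sums
      intro y
      by_cases hy : (y : ℕ) = n / 2
      · have hye : y = midc := Fin.ext hy
        have hptw : ∀ x : Fin m, M x y
            = (if (x : ℕ) < u ∨ m - u ≤ (x : ℕ) then (1 : ℤ) else 0)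
              + (if (x : ℕ) = m / 2 then c else 0) := by
          intro x
          by_cases hx : (x : ℕ) = m / 2
          · rw [Mval1 x hx y, if_pos hy, if_pos hx, if_neg (by omega)]
            ring
          · rw [Mval2 x hx y hy, if_neg hx]
            ring
        rw [Finset.sum_congr rfl (fun x _ => hptw x), Finset.sum_add_distrib,
          ind_sum m u hm hun, sum_val_eq m hm c, hye, hSm]
      · have hptw : ∀ x : Fin m, M x y
            = (if hx : (x : ℕ) = m / 2 then 0 else A' (pem m hm x hx) (pem n hn y hy))
              + (if (x : ℕ) = m / 2
                 then (if (y : ℕ) < t ∨ n - t ≤ (y : ℕ) then (1 : ℤ) else 0) else 0) := by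
          intro x
          by_cases hx : (x : ℕ) = m / 2
          · rw [Mval1 x hx y, if_neg hy, dif_pos hx, if_pos hx]; ring
          · rw [Mval3 x hx y hy, dif_neg hx, if_neg hx]; ring
        have hsg : ∑ x : Fin m,
            (if hx : (x : ℕ) = m / 2 then 0 else A' (pem m hm x hx) (pem n hn y hy))
            = ∑ i', A' i' (pem n hn y hy) :=
          sum_dite hm (fun i' => A' i' (pem n hn y hy))
        rw [Finset.sum_congr rfl (fun x _ => hptw x), Finset.sum_add_distrib,
          sum_val_eq m hm _, hsg, acol (pem n hn y hy)]
        have hpv := pem_val n hn y hy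
        have hylt := y.isLt
        have e1 : (if ((pem n hn y hy : Fin (n - 1)) : ℕ) < n / 2
            then S ⟨(pem n hn y hy : Fin (n - 1)).val, by have := (pem n hn y hy).isLt; omega⟩
            else S ⟨(pem n hn y hy : Fin (n - 1)).val + 1, by have := (pem n hn y hy).isLt; omega⟩)
            = S y := by
          by_cases h : (y : ℕ) < n / 2
          · rw [if_pos (by rw [hpv, if_pos h]; exact h)]
            congr 1
            exact Fin.ext (show ((pem n hn y hy : Fin (n - 1)) : ℕ) = (y : ℕ) from by
              rw [hpv, if_pos h])
          · rw [if_neg (by rw [hpv, if_neg h]; omega)]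
            congr 1
            exact Fin.ext (show ((pem n hn y hy : Fin (n - 1)) : ℕ) + 1 = (y : ℕ) from by
              rw [hpv, if_neg h]; omega)
        have e2 : (if ((pem n hn y hy : Fin (n - 1)) : ℕ) < t
              ∨ n - 1 - t ≤ ((pem n hn y hy : Fin (n - 1)) : ℕ) then (1 : ℤ) else 0)
            = (if (y : ℕ) < t ∨ n - t ≤ (y : ℕ) then (1 : ℤ) else 0) := by
          rw [hpv]
          split_ifs <;> omega
        rw [e1, e2]
        ring
    · -- centrosymmetry
      intro x y
      have hxlt := x.isLt
      have hylt := y.isLt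
      have hxr : ((x.rev : Fin m) : ℕ) = m - 1 - (x : ℕ) := by rw [Fin.val_rev]; omega
      have hyr : ((y.rev : Fin n) : ℕ) = n - 1 - (y : ℕ) := by rw [Fin.val_rev]; omega
      by_cases hx : (x : ℕ) = m / 2
      · have hx' : ((x.rev : Fin m) : ℕ) = m / 2 := by omega
        rw [Mval1 x hx y, Mval1 x.rev hx' y.rev, hyr]
        split_ifs <;> omega
      by_cases hy : (y : ℕ) = n / 2
      · have hx' : ¬ ((x.rev : Fin m) : ℕ) = m / 2 := by omega
        have hy' : ((y.rev : Fin n) : ℕ) = n / 2 := by omega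
        rw [Mval2 x hx y hy, Mval2 x.rev hx' y.rev hy', hxr]
        split_ifs <;> omega
      · have hx' : ¬ ((x.rev : Fin m) : ℕ) = m / 2 := by omega
        have hy' : ¬ ((y.rev : Fin n) : ℕ) = n / 2 := by omega
        rw [Mval3 x hx y hy, Mval3 x.rev hx' y.rev hy',
          pem_rev m hm x hx hx', pem_rev n hn y hy hy']
        exact acen _ _
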